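/- The function u(x₁,…,xₙ) = Σ_{i=1}^{n−2} aᵢxᵢ + b·arctan(xₙ/x_{n−1}) on the half-space {x_{n−1} > 0} ⊂ ℝⁿ is harmonic and horizontally homothetic (⟨∇u, ∇‖∇u‖⟩ = 0), with ‖∇u‖² = Σ_{i=1}^{n−2} aᵢ² + b²/(x_{n−1}² + xₙ²). -/

import Mathlib

open scoped RealInnerProductSpace

set_option maxHeartbeats 1000000 in
theorem stmt_12 (n : ℕ) (hn : 2 ≤ n) (a : Fin n → ℝ) (b : ℝ)
    (u : EuclideanSpace ℝ (Fin n) → ℝ)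
    (hu : ∀ x, u x =
      (∑ i ∈ Finset.univ.filter (fun i : Fin n => (i : ℕ) < n - 2), a i * x i)
        + b * Real.arctan (x ⟨n - 1, by omega⟩ / x ⟨n - 2, by omega⟩)) :
    ∀ x : EuclideanSpace ℝ (Fin n), 0 < x ⟨n - 2, by omega⟩ →
      (∑ i : Fin n, fderiv ℝ (fun y => fderiv ℝ u y (EuclideanSpace.single i 1)) x
          (EuclideanSpace.single i 1) = 0) ∧
      ⟪gradient u x, gradient (fun y => ‖gradient u y‖) x⟫ = 0 ∧
      ‖gradient u x‖ ^ 2 =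
        (∑ i ∈ Finset.univ.filter (fun i : Fin n => (i : ℕ) < n - 2), (a i) ^ 2)
          + b ^ 2 / ((x ⟨n - 2, by omega⟩) ^ 2 + (x ⟨n - 1, by omega⟩) ^ 2) := by
  have h0n : n - 2 < n := by omega
  have h1n : n - 1 < n := by omega
  set i0 : Fin n := ⟨n - 2, h0n⟩ with hi0def
  set i1 : Fin n := ⟨n - 1, h1n⟩ with hi1def
  have hne : i0 ≠ i1 := Fin.ne_of_val_ne (by simp [hi0def, hi1def]; omega)
  set F : Finset (Fin n) := Finset.univ.filter (fun i : Fin n => (i : ℕ) < n - 2) with hFdef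
  have hFlt : ∀ i ∈ F, (i : ℕ) < n - 2 := by
    intro i hi
    simpa [hFdef] using hi
  have hFne0 : ∀ i ∈ F, i ≠ i0 := fun i hi =>
    Fin.ne_of_val_ne (by have := hFlt i hi; simp [hi0def]; omega)
  have hFne1 : ∀ i ∈ F, i ≠ i1 := fun i hi =>
    Fin.ne_of_val_ne (by have := hFlt i hi; simp [hi1def]; omega)
  have hi0F : i0 ∉ F := by simp [hFdef, hi0def]
  have hi1F : i1 ∉ F := by simp [hFdef, hi1def]; omega
  set r : EuclideanSpace ℝ (Fin n) → ℝ := fun y => y i0 ^ 2 + y i1 ^ 2 with hrdef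
  set g : EuclideanSpace ℝ (Fin n) → EuclideanSpace ℝ (Fin n) := fun y =>
    (∑ i ∈ F, a i • EuclideanSpace.single i (1:ℝ))
      + (-b * y i1 / r y) • EuclideanSpace.single i0 (1:ℝ)
      + (b * y i0 / r y) • EuclideanSpace.single i1 (1:ℝ) with hgdef
  -- components of g
  have hsum_apply : ∀ j : Fin n, (∑ i ∈ F, a i • EuclideanSpace.single i (1:ℝ)) j
      = if j ∈ F then a j else 0 := by
    intro j
    have h1 : (∑ i ∈ F, a i • EuclideanSpace.single i (1:ℝ)) j
        = EuclideanSpace.proj (𝕜 := ℝ) j (∑ i ∈ F, a i • EuclideanSpace.single i (1:ℝ)) := rfl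
    have h2 : ∀ i ∈ F, EuclideanSpace.proj (𝕜 := ℝ) j (a i • EuclideanSpace.single i (1:ℝ))
        = if j = i then a i else 0 := by
      intro i _
      rw [map_smul]
      simp [EuclideanSpace.single_apply, PiLp.proj_apply, smul_eq_mul, mul_ite]
    rw [h1, map_sum, Finset.sum_congr rfl h2, Finset.sum_ite_eq]
  have hg_apply : ∀ (y : EuclideanSpace ℝ (Fin n)) (j : Fin n), g y j =
      if j = i0 then -b * y i1 / r y else if j = i1 then b * y i0 / r y
      else if j ∈ F then a j else 0 := by
    intro y j
    have hgj : g y j = (if j ∈ F then a j else 0)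
        + (-b * y i1 / r y) * (if j = i0 then (1:ℝ) else 0)
        + (b * y i0 / r y) * (if j = i1 then (1:ℝ) else 0) := by
      simp only [hgdef, PiLp.add_apply, PiLp.smul_apply, smul_eq_mul,
        EuclideanSpace.single_apply, hsum_apply]
    rw [hgj]
    by_cases hj0 : j = i0
    · subst hj0
      rw [if_pos rfl, if_pos rfl, if_neg hne, if_neg hi0F]
      ring
    · by_cases hj1 : j = i1
      · subst hj1
        rw [if_neg hj0, if_pos rfl, if_neg hj0, if_pos rfl, if_neg hi1F]
        ring
      · rw [if_neg hj0, if_neg hj1, if_neg hj0, if_neg hj1, mul_zero, mul_zero,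
          add_zero, add_zero]
  -- projections have derivatives
  have hproj : ∀ (i : Fin n) (y : EuclideanSpace ℝ (Fin n)),
      HasFDerivAt (𝕜 := ℝ) (fun z : EuclideanSpace ℝ (Fin n) => (z i : ℝ))
        (EuclideanSpace.proj (𝕜 := ℝ) i) y := fun i y => (EuclideanSpace.proj (𝕜 := ℝ) i).hasFDerivAt
  -- the gradient of u
  have hgrad : ∀ y, 0 < y i0 → HasGradientAt u (g y) y := by
    intro y hy
    have hy0 : y i0 ≠ 0 := ne_of_gt hy
    have hry : 0 < r y := add_pos_of_pos_of_nonneg (pow_pos hy 2) (sq_nonneg _)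
    have hinv : HasFDerivAt (fun z : EuclideanSpace ℝ (Fin n) => (z i0)⁻¹)
        ((-(y i0 ^ 2)⁻¹) • EuclideanSpace.proj (𝕜 := ℝ) i0) y :=
      (hasDerivAt_inv hy0).comp_hasFDerivAt y (hproj i0 y)
    have hw := (hproj i1 y).fun_mul hinv
    have harc := (Real.hasDerivAt_arctan (y i1 * (y i0)⁻¹)).comp_hasFDerivAt y hw
    have hL : HasFDerivAt (fun z : EuclideanSpace ℝ (Fin n) => ∑ i ∈ F, a i * z i)
        (∑ i ∈ F, a i • EuclideanSpace.proj (𝕜 := ℝ) i) y :=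
      HasFDerivAt.fun_sum (fun i _ => (hproj i y).const_mul (a i))
    have htotal := hL.add (harc.const_mul b)
    have hueq : u = fun z : EuclideanSpace ℝ (Fin n) =>
        (∑ i ∈ F, a i * z i) + b * Real.arctan (z i1 * (z i0)⁻¹) := by
      funext z
      rw [hu z, div_eq_mul_inv]
    rw [hasGradientAt_iff_hasFDerivAt, hueq]
    refine htotal.congr_fderiv (Eq.symm ?_)
    refine ContinuousLinearMap.ext fun v => ?_
    have hden : (1 : ℝ) + (y i1 * (y i0)⁻¹) ^ 2 ≠ 0 := by positivity
    simp only [InnerProductSpace.toDual_apply_apply, hgdef, inner_add_left, real_inner_smul_left,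
      sum_inner, EuclideanSpace.inner_single_left, map_one, one_mul, conj_trivial,
      ContinuousLinearMap.add_apply, ContinuousLinearMap.smul_apply,
      ContinuousLinearMap.coe_sum', Finset.sum_apply, smul_eq_mul, Function.comp,
      PiLp.proj_apply, hrdef]
    rw [add_assoc]
    congr 1
    field_simp
  have hgradu : ∀ y, 0 < y i0 → gradient u y = g y := fun y hy => (hgrad y hy).gradient
  have hopen : IsOpen {y : EuclideanSpace ℝ (Fin n) | 0 < y i0} :=
    isOpen_lt continuous_const (EuclideanSpace.proj (𝕜 := ℝ) i0).continuous
  intro x hx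
  have hx' : 0 < x i0 := hx
  have hmem : {y : EuclideanSpace ℝ (Fin n) | 0 < y i0} ∈ nhds x := hopen.mem_nhds hx'
  have hx0 : x i0 ≠ 0 := ne_of_gt hx'
  have hrx : 0 < r x := add_pos_of_pos_of_nonneg (pow_pos hx' 2) (sq_nonneg _)
  have hpair : Finset.univ.filter (fun i : Fin n => ¬ (i : ℕ) < n - 2) = {i0, i1} := by
    ext j
    simp only [Finset.mem_filter, Finset.mem_univ, true_and, Finset.mem_insert,
      Finset.mem_singleton, Fin.ext_iff, hi0def, hi1def]
    have := j.isLt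
    omega
  -- eventual form of directional derivatives
  have hfdapp : ∀ i : Fin n, (fun y => fderiv ℝ u y (EuclideanSpace.single i (1:ℝ)))
      =ᶠ[nhds x] (fun y => g y i) := by
    intro i
    filter_upwards [hmem] with y hy
    rw [(hgrad y hy).hasFDerivAt.fderiv]
    simp [InnerProductSpace.toDual_apply_apply, EuclideanSpace.inner_single_right]
  -- derivative of r
  have hrD : HasFDerivAt r ((x i0 • EuclideanSpace.proj (𝕜 := ℝ) i0 + x i0 • EuclideanSpace.proj (𝕜 := ℝ) i0)
      + (x i1 • EuclideanSpace.proj (𝕜 := ℝ) i1 + x i1 • EuclideanSpace.proj (𝕜 := ℝ) i1)) x := by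
    have h := ((hproj i0 x).mul (hproj i0 x)).add ((hproj i1 x).mul (hproj i1 x))
    have : r = fun y : EuclideanSpace ℝ (Fin n) => y i0 * y i0 + y i1 * y i1 := by
      funext y; simp [hrdef]; ring
    rw [this]
    exact h
  have hinvr : HasFDerivAt (fun y : EuclideanSpace ℝ (Fin n) => (r y)⁻¹)
      ((-(r x ^ 2)⁻¹) • ((x i0 • EuclideanSpace.proj (𝕜 := ℝ) i0 + x i0 • EuclideanSpace.proj (𝕜 := ℝ) i0)
      + (x i1 • EuclideanSpace.proj (𝕜 := ℝ) i1 + x i1 • EuclideanSpace.proj (𝕜 := ℝ) i1))) x :=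
    (hasDerivAt_inv hrx.ne').comp_hasFDerivAt x hrD
  -- part 1
  have part1 : ∑ i : Fin n, fderiv ℝ (fun y => fderiv ℝ u y (EuclideanSpace.single i 1)) x
      (EuclideanSpace.single i 1) = 0 := by
    have hrw : ∀ i : Fin n, (∑ i : Fin n,
        fderiv ℝ (fun y => fderiv ℝ u y (EuclideanSpace.single i 1)) x
          (EuclideanSpace.single i 1)) = ∑ i : Fin n, fderiv ℝ (fun y => g y i) x
          (EuclideanSpace.single i 1) := fun _ =>
      Finset.sum_congr rfl (fun i _ => by rw [(hfdapp i).fderiv_eq])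
    rw [hrw i0]
    rw [← Finset.sum_filter_add_sum_filter_not Finset.univ (fun i : Fin n => (i : ℕ) < n - 2),
      hpair, Finset.sum_pair hne]
    have hzero : ∑ i ∈ Finset.univ.filter (fun i : Fin n => (i : ℕ) < n - 2),
        fderiv ℝ (fun y => g y i) x (EuclideanSpace.single i 1) = 0 := by
      refine Finset.sum_eq_zero fun i hi => ?_
      have hiF : i ∈ F := by rwa [hFdef]
      have : (fun y : EuclideanSpace ℝ (Fin n) => g y i) = fun _ => a i := by
        funext y
        rw [hg_apply y i, if_neg (hFne0 i hiF), if_neg (hFne1 i hiF), if_pos hiF]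
      rw [this, fderiv_fun_const]
      simp
    rw [hzero, zero_add]
    -- second partials at i0 and i1
    have hG0 : (fun y : EuclideanSpace ℝ (Fin n) => g y i0)
        = fun y => (-b * y i1) * (r y)⁻¹ := by
      funext y
      rw [hg_apply y i0, if_pos rfl, div_eq_mul_inv]
    have hG1 : (fun y : EuclideanSpace ℝ (Fin n) => g y i1)
        = fun y => (b * y i0) * (r y)⁻¹ := by
      funext y
      rw [hg_apply y i1, if_neg (Ne.symm hne), if_pos rfl, div_eq_mul_inv]
    have hd0 := ((hproj i1 x).const_mul (-b)).fun_mul hinvr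
    have hd1 := ((hproj i0 x).const_mul b).fun_mul hinvr
    rw [hG0, hG1, hd0.fderiv, hd1.fderiv]
    have e00 : EuclideanSpace.proj (𝕜 := ℝ) i0 (EuclideanSpace.single i0 (1:ℝ)) = 1 := by
      simp [EuclideanSpace.single_apply]
    have e10 : EuclideanSpace.proj (𝕜 := ℝ) i1 (EuclideanSpace.single i0 (1:ℝ)) = 0 := by
      simp [EuclideanSpace.single_apply, Ne.symm hne]
    have e01 : EuclideanSpace.proj (𝕜 := ℝ) i0 (EuclideanSpace.single i1 (1:ℝ)) = 0 := by
      simp [EuclideanSpace.single_apply, hne]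
    have e11 : EuclideanSpace.proj (𝕜 := ℝ) i1 (EuclideanSpace.single i1 (1:ℝ)) = 1 := by
      simp [EuclideanSpace.single_apply]
    simp only [ContinuousLinearMap.add_apply, ContinuousLinearMap.smul_apply, e00, e10,
      e01, e11, smul_eq_mul]
    have hr2 : (r x : ℝ) ≠ 0 := hrx.ne'
    field_simp
    ring
  -- part 3 computation
  have hnormsq : ∀ y, 0 < y i0 → ‖g y‖ ^ 2 = (∑ i ∈ F, a i ^ 2) + b ^ 2 / r y := by
    intro y hy
    have hry : 0 < r y := add_pos_of_pos_of_nonneg (pow_pos hy 2) (sq_nonneg _)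
    have h1 : ‖g y‖ ^ 2 = ∑ i, g y i ^ 2 := by
      rw [EuclideanSpace.norm_eq, Real.sq_sqrt (Finset.sum_nonneg fun i _ => by positivity)]
      exact Finset.sum_congr rfl fun i _ => by rw [Real.norm_eq_abs, sq_abs]
    rw [h1, ← Finset.sum_filter_add_sum_filter_not Finset.univ (fun i : Fin n => (i : ℕ) < n - 2),
      hpair, Finset.sum_pair hne]
    have h2 : ∑ i ∈ Finset.univ.filter (fun i : Fin n => (i : ℕ) < n - 2), g y i ^ 2
        = ∑ i ∈ F, a i ^ 2 := by
      refine Finset.sum_congr (by rw [hFdef]) fun i hi => ?_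
      have hiF : i ∈ F := hi
      rw [hg_apply y i, if_neg (hFne0 i hiF), if_neg (hFne1 i hiF), if_pos hiF]
    rw [h2, hg_apply y i0, if_pos rfl, hg_apply y i1, if_neg (Ne.symm hne), if_pos rfl]
    congr 1
    have hry' : r y ≠ 0 := hry.ne'
    field_simp
    simp only [hrdef]
    ring
  -- part 2
  have part2 : ⟪gradient u x, gradient (fun y => ‖gradient u y‖) x⟫ = 0 := by
    set C : ℝ := ∑ i ∈ F, a i ^ 2 with hCdef
    have hCnn : 0 ≤ C := Finset.sum_nonneg fun i _ => sq_nonneg _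
    by_cases hs : C + b ^ 2 / r x = 0
    · have h1 : ‖gradient u x‖ ^ 2 = 0 := by
        rw [hgradu x hx', hnormsq x hx']; exact hs
      have h2 : gradient u x = 0 := by
        have := pow_eq_zero_iff (n := 2) (by norm_num) |>.mp h1
        exact norm_eq_zero.mp this
      rw [h2, inner_zero_left]
    · have hspos : 0 < C + b ^ 2 / r x :=
        lt_of_le_of_ne (by positivity) (Ne.symm hs)
      have hsq : Real.sqrt (C + b ^ 2 / r x) ≠ 0 := by positivity
      have hNev : (fun y : EuclideanSpace ℝ (Fin n) => ‖gradient u y‖)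
          =ᶠ[nhds x] (fun y => Real.sqrt (C + b ^ 2 / r y)) := by
        filter_upwards [hmem] with y hy
        rw [hgradu y hy, ← Real.sqrt_sq (norm_nonneg (g y)), hnormsq y hy]
      rw [div_eq_mul_inv] at hs hspos hsq
      set s : ℝ := Real.sqrt (C + b ^ 2 * (r x)⁻¹) with hsdef
      have hCmp : HasFDerivAt (fun y : EuclideanSpace ℝ (Fin n) => C + b ^ 2 * (r y)⁻¹)
          ((b ^ 2) • ((-(r x ^ 2)⁻¹) • ((x i0 • EuclideanSpace.proj (𝕜 := ℝ) i0
            + x i0 • EuclideanSpace.proj (𝕜 := ℝ) i0)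
          + (x i1 • EuclideanSpace.proj (𝕜 := ℝ) i1 + x i1 • EuclideanSpace.proj (𝕜 := ℝ) i1)))) x :=
        (hinvr.const_mul (b ^ 2)).const_add C
      have hNev' : (fun y : EuclideanSpace ℝ (Fin n) => ‖gradient u y‖)
          =ᶠ[nhds x] (fun y => Real.sqrt (C + b ^ 2 * (r y)⁻¹)) := by
        filter_upwards [hmem] with y hy
        rw [hgradu y hy, ← Real.sqrt_sq (norm_nonneg (g y)), hnormsq y hy, div_eq_mul_inv]
      have hsqrtD := (Real.hasDerivAt_sqrt hs).comp_hasFDerivAt x hCmp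
      have hN : HasFDerivAt (fun y : EuclideanSpace ℝ (Fin n) => ‖gradient u y‖)
          ((1 / (2 * s)) •
            ((b ^ 2) • ((-(r x ^ 2)⁻¹) • ((x i0 • EuclideanSpace.proj (𝕜 := ℝ) i0
            + x i0 • EuclideanSpace.proj (𝕜 := ℝ) i0)
          + (x i1 • EuclideanSpace.proj (𝕜 := ℝ) i1 + x i1 • EuclideanSpace.proj (𝕜 := ℝ) i1))))) x :=
        hsqrtD.congr_of_eventuallyEq hNev'
      have hGN : HasGradientAt (fun y : EuclideanSpace ℝ (Fin n) => ‖gradient u y‖)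
          ((-b ^ 2 * x i0 / (r x ^ 2 * s))
              • EuclideanSpace.single i0 (1:ℝ)
            + (-b ^ 2 * x i1 / (r x ^ 2 * s))
              • EuclideanSpace.single i1 (1:ℝ)) x := by
        rw [hasGradientAt_iff_hasFDerivAt]
        refine hN.congr_fderiv (Eq.symm ?_)
        refine ContinuousLinearMap.ext fun v => ?_
        simp only [InnerProductSpace.toDual_apply_apply, inner_add_left, real_inner_smul_left,
          EuclideanSpace.inner_single_left, map_one, one_mul, conj_trivial,
          ContinuousLinearMap.add_apply, ContinuousLinearMap.smul_apply, smul_eq_mul,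
          PiLp.proj_apply]
        field_simp
        ring
      rw [hGN.gradient, hgradu x hx']
      rw [inner_add_right, real_inner_smul_right, real_inner_smul_right,
        EuclideanSpace.inner_single_right, EuclideanSpace.inner_single_right]
      simp only [one_mul, conj_trivial]
      rw [hg_apply x i0, hg_apply x i1, if_pos rfl, if_neg (Ne.symm hne), if_pos rfl]
      have hrne : r x ≠ 0 := hrx.ne'
      field_simp
      ring
  refine ⟨part1, part2, ?_⟩
  rw [hgradu x hx', hnormsq x hx']
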